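/- arXiv:1705.07277 — 3 statements merged into one kernel-verified Lean document; each statement's English description precedes it below -/
import Mathlib

section
/- Let β > 1. If w ∈ Σ_β^n and w′ ∈ Σ_β^m are both full admissible words, then the concatenation ww′ is a full admissible word of length n + m. -/
noncomputable def Tb (β x : ℝ) : ℝ := β * x - ⌊β * x⌋

/-- The (i+1)-th digit of the β-expansion of x (0-indexed). -/
noncomputable def dig (β x : ℝ) (i : ℕ) : ℕ := (⌊β * (Tb β)^[i] x⌋).toNat

/-- w is an admissible word for base β. -/
def Adm (β : ℝ) (w : List ℕ) : Prop :=
  ∃ x, x ∈ Set.Ico (0:ℝ) 1 ∧ ∀ i (h : i < w.length), w[i] = dig β x i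

/-- u is an admissible digit sequence for base β. -/
def AdmSeq (β : ℝ) (u : ℕ → ℕ) : Prop :=
  ∃ x, x ∈ Set.Ico (0:ℝ) 1 ∧ ∀ i, u i = dig β x i

/-- The cylinder I(w) ⊆ [0,1). -/
def cyl (β : ℝ) (w : List ℕ) : Set ℝ :=
  {x | x ∈ Set.Ico (0:ℝ) 1 ∧ ∀ i (h : i < w.length), w[i] = dig β x i}

/-- w is a full word: T_β^{|w|} maps I(w) onto [0,1). -/
def Full (β : ℝ) (w : List ℕ) : Prop :=
  (Tb β)^[w.length] '' cyl β w = Set.Ico 0 1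

/-- The β-expansion of 1 is finite with length M. -/
def FiniteLen (β : ℝ) (M : ℕ) : Prop :=
  0 < M ∧ dig β 1 (M-1) ≠ 0 ∧ ∀ j, M ≤ j → dig β 1 j = 0

open Classical in
/-- The (i+1)-th digit of the modified β-expansion ε*(1,β) (0-indexed). -/
noncomputable def modExp (β : ℝ) (i : ℕ) : ℕ :=
  if h : ∃ M, FiniteLen β M then
    (if (i+1) % (Nat.find h) = 0 then dig β 1 (Nat.find h - 1) - 1
     else dig β 1 (i % Nat.find h))
  else dig β 1 i

/-- View a finite word as the sequence w0^∞. -/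
def wordSeq (w : List ℕ) (i : ℕ) : ℕ := w.getD i 0

/-- Strict lexicographic order on sequences. -/
def seqLt (u v : ℕ → ℕ) : Prop := ∃ k, (∀ i, i < k → u i = v i) ∧ u k < v k

/-- Strict lexicographic order on finite words (identified with w0^∞). -/
def wlt (u v : List ℕ) : Prop := seqLt (wordSeq u) (wordSeq v)

/-- Concatenation of a finite word with a sequence. -/
def catSeq (w : List ℕ) (u : ℕ → ℕ) (i : ℕ) : ℕ :=
  if h : i < w.length then w[i] else u (i - w.length)

open Classical in
/-- The largest position k ≤ s with ε_k ≠ 0 (greedy step). -/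
noncomputable def greedyStep (β : ℝ) (s : ℕ) : ℕ :=
  Nat.findGreatest (fun k => 1 ≤ k ∧ dig β 1 (k-1) ≠ 0) s

/-- τ_β(s): number of terms in the greedy representation of s by nonzero positions. -/
noncomputable def tau (β : ℝ) : ℕ → ℕ
  | 0 => 0
  | s + 1 => tau β (s - (greedyStep β (s+1) - 1)) + 1
decreasing_by omega

open Classical in
/-- r_s(β): maximal length of a string of 0's in ε₁*⋯ε_s*. -/
noncomputable def rrun (β : ℝ) (s : ℕ) : ℕ :=
  Nat.findGreatest (fun k => 1 ≤ k ∧ ∃ i, i + k ≤ s ∧ ∀ t, t < k → modExp β (i + t) = 0) s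

/-- v is the immediate successor of u in the lexicographic order on Σ_β^n. -/
def SuccIn (β : ℝ) (n : ℕ) (u v : List ℕ) : Prop :=
  u.length = n ∧ v.length = n ∧ Adm β u ∧ Adm β v ∧ wlt u v ∧
  ¬ ∃ z : List ℕ, z.length = n ∧ Adm β z ∧ wlt u z ∧ wlt z v

/-- There is a run of l consecutive non-full words in Σ_β^n. -/
def NonFullRun (β : ℝ) (n l : ℕ) : Prop :=
  ∃ f : ℕ → List ℕ,
    (∀ j, j < l → (f j).length = n ∧ Adm β (f j) ∧ ¬ Full β (f j)) ∧
    (∀ j, j + 1 < l → SuccIn β n (f j) (f (j+1)))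

/-- There is a maximal run of l consecutive non-full words in Σ_β^n. -/
def MaxNonFullRun (β : ℝ) (n l : ℕ) : Prop :=
  0 < l ∧ ∃ f : ℕ → List ℕ,
    (∀ j, j < l → (f j).length = n ∧ Adm β (f j) ∧ ¬ Full β (f j)) ∧
    (∀ j, j + 1 < l → SuccIn β n (f j) (f (j+1))) ∧
    (∀ u, SuccIn β n u (f 0) → Full β u) ∧
    (∀ u, SuccIn β n (f (l-1)) u → Full β u)

/-- There is a maximal run of l consecutive full words in Σ_β^n. -/
def MaxFullRun (β : ℝ) (n l : ℕ) : Prop :=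
  0 < l ∧ ∃ f : ℕ → List ℕ,
    (∀ j, j < l → (f j).length = n ∧ Adm β (f j) ∧ Full β (f j)) ∧
    (∀ j, j + 1 < l → SuccIn β n (f j) (f (j+1))) ∧
    (∀ u, SuccIn β n u (f 0) → ¬ Full β u) ∧
    (∀ u, SuccIn β n (f (l-1)) u → ¬ Full β u)

/-- The canonical decomposition of an admissible word, as in the structure theorem:
p.1 is the list of block lengths k₁,…,k_p and p.2 is the final length l. -/
def Decomp (β : ℝ) (w : List ℕ) (p : List ℕ × ℕ) : Prop :=
  1 ≤ p.2 ∧ (∀ k ∈ p.1, 1 ≤ k) ∧ p.1.sum + p.2 = w.length ∧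
  (∀ j, j < p.1.length →
    (∀ t, t < p.1.getD j 0 - 1 → w.getD ((p.1.take j).sum + t) 0 = dig β 1 t) ∧
    w.getD ((p.1.take j).sum + (p.1.getD j 0 - 1)) 0 < dig β 1 (p.1.getD j 0 - 1)) ∧
  (∀ t, t < p.2 - 1 → w.getD (p.1.sum + t) 0 = dig β 1 t) ∧
  w.getD (p.1.sum + (p.2 - 1)) 0 ≤ dig β 1 (p.2 - 1)

lemma Tb_mem (β x : ℝ) : Tb β x ∈ Set.Ico (0:ℝ) 1 := by
  have h : Tb β x = Int.fract (β * x) := rfl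
  rw [h]
  exact ⟨Int.fract_nonneg _, Int.fract_lt_one _⟩

lemma Tb_iter_mem (β : ℝ) {x : ℝ} (hx : x ∈ Set.Ico (0:ℝ) 1) (n : ℕ) :
    (Tb β)^[n] x ∈ Set.Ico (0:ℝ) 1 := by
  induction n with
  | zero => exact hx
  | succ k ih =>
    rw [Function.iterate_succ_apply']
    exact Tb_mem β _

lemma dig_shift (β x : ℝ) (n i : ℕ) : dig β x (n + i) = dig β ((Tb β)^[n] x) i := by
  unfold dig
  rw [Nat.add_comm, Function.iterate_add_apply]

lemma cyl_append (β : ℝ) (w w' : List ℕ) :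
    cyl β (w ++ w') = cyl β w ∩ (Tb β)^[w.length] ⁻¹' cyl β w' := by
  ext x
  constructor
  · rintro ⟨hx, hd⟩
    refine ⟨⟨hx, fun i hi => ?_⟩, Tb_iter_mem β hx w.length, fun i hi => ?_⟩
    · have hi' : i < (w ++ w').length := by simp; omega
      have := hd i hi'
      rwa [List.getElem_append_left hi] at this
    · have hi' : w.length + i < (w ++ w').length := by simp; omega
      have := hd (w.length + i) hi'
      rw [dig_shift β x w.length i] at this
      rw [← this]
      rw [List.getElem_append_right (by omega)]
      congr 1
      omega
  · rintro ⟨⟨hx, hd⟩, hx', hd'⟩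
    refine ⟨hx, fun i hi => ?_⟩
    rcases lt_or_ge i w.length with h | h
    · rw [List.getElem_append_left h]
      exact hd i h
    · rw [List.getElem_append_right h]
      have hlt : i - w.length < w'.length := by
        simp at hi; omega
      have := hd' (i - w.length) hlt
      rw [this, ← dig_shift β x w.length (i - w.length)]
      congr 1
      omega

/-- the concatenation of two full words is full (and admissible). -/
theorem stmt2 (β : ℝ) (hβ : 1 < β) (w w' : List ℕ)
    (h1 : Adm β w) (h2 : Adm β w') (f1 : Full β w) (f2 : Full β w') :
    Adm β (w ++ w') ∧ Full β (w ++ w') := by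
  have hlen : (w ++ w').length = w.length + w'.length := List.length_append
  have hfull : Full β (w ++ w') := by
    unfold Full at f1 f2 ⊢
    rw [hlen, cyl_append, Nat.add_comm, Function.iterate_add, Set.image_comp,
        Set.image_inter_preimage, f1, Set.inter_eq_self_of_subset_right
          (fun x hx => hx.1 : cyl β w' ⊆ Set.Ico 0 1), f2]
  refine ⟨?_, hfull⟩
  have h0 : (0:ℝ) ∈ Set.Ico (0:ℝ) 1 := ⟨le_refl 0, one_pos⟩
  rw [← hfull] at h0
  obtain ⟨x, hx, -⟩ := h0
  exact ⟨x, hx.1, hx.2⟩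
end

section
/- Let β > 1 with β ∉ ℕ. If w = w₁⋯wₙ is a full admissible word, then its last digit satisfies wₙ < ⌊β⌋. In particular, if 1 < β < 2 then wₙ = 0. -/
lemma iter_mem (β : ℝ) (k : ℕ) (x : ℝ) (hx : x ∈ Set.Ico (0:ℝ) 1) :
    (Tb β)^[k] x ∈ Set.Ico (0:ℝ) 1 := by
  cases k with
  | zero => simpa
  | succ k => rw [Function.iterate_succ_apply']; exact Tb_mem β _

lemma key_lemma (β : ℝ) (hβ : 0 < β) (w : List ℕ) (hne : w ≠ []) (x : ℝ)
    (hx : x ∈ cyl β w) :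
    (Tb β)^[w.length] x = β * (Tb β)^[w.length - 1] x - (w.getLast hne : ℝ) ∧
    (Tb β)^[w.length - 1] x ∈ Set.Ico (0:ℝ) 1 := by
  obtain ⟨hx1, hx2⟩ := hx
  have hn : 0 < w.length := List.length_pos_iff.mpr hne
  set m := w.length - 1 with hm
  have hnm : w.length = m + 1 := by omega
  set y := (Tb β)^[m] x with hy
  have hyI : y ∈ Set.Ico (0:ℝ) 1 := iter_mem β m x hx1
  have hd : w.getLast hne = dig β x m := by
    rw [List.getLast_eq_getElem]
    exact hx2 m (by omega)
  have hfl : (0:ℤ) ≤ ⌊β * y⌋ :=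
    Int.floor_nonneg.mpr (mul_nonneg hβ.le hyI.1)
  have hcast : ((w.getLast hne : ℕ) : ℝ) = (⌊β * y⌋ : ℝ) := by
    rw [hd]
    unfold dig
    rw [← hy]
    exact_mod_cast congrArg (fun z : ℤ => (z : ℝ)) (Int.toNat_of_nonneg hfl)
  refine ⟨?_, hyI⟩
  rw [hnm, Function.iterate_succ_apply', ← hy, hcast]
  unfold Tb
  ring

/-- for noninteger β, the last digit of a full word is < ⌊β⌋;
if moreover 1 < β < 2 then the last digit is 0. -/
theorem stmt4 (β : ℝ) (hβ : 1 < β) (hβn : ∀ m : ℕ, β ≠ m) (w : List ℕ)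
    (hne : w ≠ []) (h : Adm β w) (hf : Full β w) :
    w.getLast hne < Int.toNat ⌊β⌋ ∧ (β < 2 → w.getLast hne = 0) := by
  
  have hn : 0 < w.length := List.length_pos_iff.mpr hne
  have hmain : ((w.getLast hne : ℕ) : ℝ) ≤ β - 1 := by
    by_contra hc
    push_neg at hc
    obtain ⟨x, hx1, hx2⟩ := h
    have hxc : x ∈ cyl β w := ⟨hx1, hx2⟩
    obtain ⟨heq, hyI⟩ := key_lemma β (by linarith) w hne x hxc
    have hTI := iter_mem β w.length x hx1
    have h0 : (0:ℝ) ≤ β - (w.getLast hne : ℕ) := by nlinarith [hyI.2, hTI.1]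
    have hy0 : (β - ((w.getLast hne : ℕ):ℝ)) ∈ Set.Ico (0:ℝ) 1 := ⟨h0, by linarith⟩
    rw [← hf] at hy0
    obtain ⟨z, hz, hz2⟩ := hy0
    obtain ⟨heqz, hyIz⟩ := key_lemma β (by linarith) w hne z hz
    nlinarith [hyIz.2, hyIz.1]
  have hfloor : (β:ℝ) - 1 < (⌊β⌋ : ℝ) := Int.sub_one_lt_floor β
  have h1 : (1:ℤ) ≤ ⌊β⌋ := by
    rw [Int.le_floor]; exact_mod_cast hβ.le
  have hcast : ((Int.toNat ⌊β⌋ : ℕ) : ℝ) = (⌊β⌋ : ℝ) := by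
    exact_mod_cast congrArg (fun z : ℤ => (z : ℝ)) (Int.toNat_of_nonneg (by omega))
  have hlt : (w.getLast hne : ℕ) < Int.toNat ⌊β⌋ := by
    have : ((w.getLast hne : ℕ) : ℝ) < ((Int.toNat ⌊β⌋ : ℕ) : ℝ) := by
      rw [hcast]; linarith
    exact_mod_cast this
  refine ⟨hlt, fun hβ2 => ?_⟩
  have h2 : ⌊β⌋ < 2 := Int.floor_lt.mpr (by exact_mod_cast hβ2)
  omega
end

section
/- Let β > 1. If ε(1,β) is infinite, then τ_β(s) ≤ r_s(β) + 1 for every s ≥ 1. If ε(1,β) is finite with length M, then τ_β(s) ≤ r_s(β) + 1 for every 1 ≤ s ≤ M. -/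
lemma dig0_pos (β : ℝ) (hβ : 1 < β) : dig β 1 0 ≠ 0 := by
  unfold dig
  simp only [Function.iterate_zero, id_eq, mul_one]
  have : (1:ℤ) ≤ ⌊β⌋ := Int.le_floor.mpr (by exact_mod_cast hβ.le)
  omega

lemma tau_le (β : ℝ) : ∀ s, tau β s ≤ s := by
  intro s
  induction s using Nat.strong_induction_on with
  | _ s ih =>
    match s with
    | 0 => simp [tau]
    | t+1 =>
      rw [tau]
      have hg : 1 ≤ greedyStep β (t+1) ∨ greedyStep β (t+1) = 0 := by omega
      have := ih (t - (greedyStep β (t+1) - 1)) (by omega)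
      omega

lemma digzero (β : ℝ) (s j : ℕ) (h1 : greedyStep β s ≤ j) (h2 : j < s) :
    dig β 1 j = 0 := by
  by_contra hne
  have := Nat.findGreatest_is_greatest
    (P := fun k => 1 ≤ k ∧ dig β 1 (k-1) ≠ 0) (n := s)
    (by omega : greedyStep β s < j+1) (by omega)
  exact this ⟨by omega, by simpa using hne⟩

lemma key14 (β : ℝ) (hβ : 1 < β) (s : ℕ) (hs : 1 ≤ s)
    (hzero : ∀ j, greedyStep β s ≤ j → j < s → modExp β j = 0) :
    tau β s ≤ rrun β s + 1 := by
  classical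
  obtain ⟨t, rfl⟩ : ∃ t, s = t+1 := ⟨s-1, by omega⟩
  set g := greedyStep β (t+1) with hg
  have hg1 : 1 ≤ g := Nat.le_findGreatest hs ⟨le_refl 1, dig0_pos β hβ⟩
  have hgle : g ≤ t+1 := Nat.findGreatest_le _
  rw [tau, ← hg]
  have hL : t - (g - 1) = (t+1) - g := by omega
  rcases Nat.eq_zero_or_pos ((t+1) - g) with h0 | hpos
  · rw [hL, h0]
    simp [tau]
  · have hr : (t+1) - g ≤ rrun β (t+1) := by
      apply Nat.le_findGreatest (by omega)
      refine ⟨hpos, g, by omega, ?_⟩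
      intro u hu
      exact hzero (g + u) (by omega) (by omega)
    have := tau_le β (t - (g - 1))
    omega

lemma finiteLen_uniq (β : ℝ) {M₁ M₂ : ℕ} (h₁ : FiniteLen β M₁)
    (h₂ : FiniteLen β M₂) : M₁ = M₂ := by
  by_contra hne
  rcases Nat.lt_or_ge M₁ M₂ with h | h
  · exact h₂.2.1 (h₁.2.2 (M₂-1) (by omega))
  · exact h₁.2.1 (h₂.2.2 (M₁-1) (by omega))

/-- τ_β(s) ≤ r_s(β) + 1 (for all s ≥ 1 in the infinite case,
and for 1 ≤ s ≤ M in the finite case). -/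
theorem stmt14 (β : ℝ) (hβ : 1 < β) :
    ((¬ ∃ M, FiniteLen β M) → ∀ s, 1 ≤ s → tau β s ≤ rrun β s + 1) ∧
    (∀ M, FiniteLen β M → ∀ s, 1 ≤ s → s ≤ M → tau β s ≤ rrun β s + 1) := by
  constructor
  · intro hM s hs
    apply key14 β hβ s hs
    intro j h1 h2
    have hm : modExp β j = dig β 1 j := by
      rw [modExp, dif_neg hM]
    rw [hm]
    exact digzero β s j h1 h2
  · intro M hM s hs hsM
    classical
    have hEx : ∃ M, FiniteLen β M := ⟨M, hM⟩
    have hfind : Nat.find hEx = M := finiteLen_uniq β (Nat.find_spec hEx) hM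
    apply key14 β hβ s hs
    intro j h1 h2
    have hjM : j + 1 < M := by
      rcases eq_or_lt_of_le hsM with rfl | hlt
      · exfalso
        have hgM : s ≤ greedyStep β s :=
          Nat.le_findGreatest le_rfl ⟨hM.1, hM.2.1⟩
        omega
      · omega
    have hm : modExp β j = dig β 1 j := by
      rw [modExp, dif_pos hEx, hfind, if_neg, Nat.mod_eq_of_lt (by omega)]
      rw [Nat.mod_eq_of_lt hjM]
      omega
    rw [hm]
    exact digzero β s j h1 h2
end
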